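/- Let Σ be a finite alphabet and let L ⊆ Σ* be a bounded language. Then L is well-quasi-ordered by the infix relation if and only if there exist n ∈ ℕ and sets S₁, …, S_n, P₁, …, P_n ⊆ Σ* such that each S_i is a chain for the suffix relation, each P_i is a chain for the prefix relation, and L ⊆ ⋃_{i=1}^n S_i·P_i. -/

import Mathlib

/-- The `p`-fold concatenation of the word `x`. -/
def wpow {A : Type*} (x : List A) (p : ℕ) : List A := (List.replicate p x).flatten

/-- A subset `L` of words is well-quasi-ordered by the relation `r`. -/
def IsWqoOn {A : Type*} (L : Set (List A)) (r : List A → List A → Prop) : Prop :=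
  ∀ f : ℕ → List A, (∀ n, f n ∈ L) → ∃ i j, i < j ∧ r (f i) (f j)

/-- A chain for the relation `r`: any two elements are comparable. -/
def IsChainFor {A : Type*} (C : Set (List A)) (r : List A → List A → Prop) : Prop :=
  ∀ u ∈ C, ∀ v ∈ C, r u v ∨ r v u

/-- A language is bounded if it is contained in `w₁* ⋯ w_n*` for some words `wᵢ`. -/
def IsBoundedLang {A : Type*} (L : Set (List A)) : Prop :=
  ∃ (n : ℕ) (w : Fin n → List A), ∀ u ∈ L, ∃ c : Fin n → ℕ,
    u = (List.ofFn fun i : Fin n => wpow (w i) (c i)).flatten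

namespace StatementEight

variable {A : Type*}

theorem wpow_zero (x : List A) : wpow x 0 = [] := rfl

theorem wpow_succ (x : List A) (p : ℕ) : wpow x (p+1) = x ++ wpow x p := by
  simp [wpow, List.replicate_succ]

theorem wpow_add (x : List A) (a b : ℕ) : wpow x (a+b) = wpow x a ++ wpow x b := by
  induction a with
  | zero => simp [wpow_zero]
  | succ a ih =>
      have : a + 1 + b = (a + b) + 1 := by omega
      rw [this, wpow_succ, wpow_succ, ih, List.append_assoc]

theorem wpow_nil (p : ℕ) : wpow ([] : List A) p = [] := by
  induction p with
  | zero => rfl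
  | succ p ih => rw [wpow_succ, ih]; rfl

theorem length_wpow (x : List A) (p : ℕ) : (wpow x p).length = p * x.length := by
  induction p with
  | zero => simp [wpow_zero]
  | succ p ih => rw [wpow_succ]; simp [ih]; ring

theorem wpow_one (x : List A) : wpow x 1 = x := by
  rw [wpow_succ, wpow_zero, List.append_nil]

theorem wpow_suffix_wpow (x : List A) {a b : ℕ} (h : a ≤ b) : wpow x a <:+ wpow x b := by
  obtain ⟨d, rfl⟩ := Nat.exists_eq_add_of_le h
  rw [Nat.add_comm, wpow_add]
  exact ⟨wpow x d, rfl⟩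

theorem wpow_prefix_wpow (x : List A) {a b : ℕ} (h : a ≤ b) : wpow x a <+: wpow x b := by
  obtain ⟨d, rfl⟩ := Nat.exists_eq_add_of_le h
  rw [wpow_add]
  exact ⟨wpow x d, rfl⟩

/-- All suffixes of powers of `z`. -/
def SuffPow (z : List A) : Set (List A) := {v | ∃ k, v <:+ wpow z k}

/-- All prefixes of powers of `z`. -/
def PrefPow (z : List A) : Set (List A) := {v | ∃ k, v <+: wpow z k}

theorem suffPow_chain (z : List A) : IsChainFor (SuffPow z) (· <:+ ·) := by
  rintro u ⟨k, hk⟩ v ⟨m, hm⟩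
  rcases le_total k m with h | h
  · exact List.suffix_or_suffix_of_suffix (hk.trans (wpow_suffix_wpow z h)) hm
  · exact List.suffix_or_suffix_of_suffix hk (hm.trans (wpow_suffix_wpow z h))

theorem prefPow_chain (z : List A) : IsChainFor (PrefPow z) (· <+: ·) := by
  rintro u ⟨k, hk⟩ v ⟨m, hm⟩
  rcases le_total k m with h | h
  · exact List.prefix_or_prefix_of_prefix (hk.trans (wpow_prefix_wpow z h)) hm
  · exact List.prefix_or_prefix_of_prefix hk (hm.trans (wpow_prefix_wpow z h))

/-- Suffixes of a fixed word form a chain. -/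
theorem suffOf_chain (a : List A) : IsChainFor {v | v <:+ a} (· <:+ ·) := by
  intro u hu v hv
  exact List.suffix_or_suffix_of_suffix hu hv

theorem prefOf_chain (a : List A) : IsChainFor {v | v <+: a} (· <+: ·) := by
  intro u hu v hv
  exact List.prefix_or_prefix_of_prefix hu hv

theorem singleton_chain_suffix (a : List A) : IsChainFor {a} (· <:+ ·) := by
  rintro u rfl v rfl
  exact Or.inl (List.suffix_refl _)

theorem singleton_chain_prefix (a : List A) : IsChainFor {a} (· <+: ·) := by
  rintro u rfl v rfl
  exact Or.inl (List.prefix_refl _)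

theorem append_chain_prefix (a : List A) {P : Set (List A)} (hP : IsChainFor P (· <+: ·)) :
    IsChainFor {w | ∃ p ∈ P, w = a ++ p} (· <+: ·) := by
  rintro u ⟨p, hp, rfl⟩ v ⟨q, hq, rfl⟩
  rcases hP p hp q hq with h | h
  · exact Or.inl ((List.prefix_append_right_inj a).2 h)
  · exact Or.inr ((List.prefix_append_right_inj a).2 h)

/-- The product of a suffix chain and a prefix chain. -/
def prodSet (S P : Set (List A)) : Set (List A) := {w | ∃ a ∈ S, ∃ b ∈ P, w = a ++ b}

/-- Coverability by finitely many chain products. -/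
def Cov (T : Set (List A)) : Prop :=
  ∃ C : Set (Set (List A) × Set (List A)), C.Finite ∧
    (∀ pr ∈ C, IsChainFor pr.1 (· <:+ ·) ∧ IsChainFor pr.2 (· <+: ·)) ∧
    T ⊆ ⋃ pr ∈ C, prodSet pr.1 pr.2

theorem Cov.mono {T T' : Set (List A)} (h : Cov T') (hsub : T ⊆ T') : Cov T := by
  obtain ⟨C, hfin, hch, hcov⟩ := h
  exact ⟨C, hfin, hch, hsub.trans hcov⟩

theorem cov_empty : Cov (∅ : Set (List A)) := ⟨∅, Set.finite_empty, by simp, by simp⟩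

theorem Cov.union {T T' : Set (List A)} (h : Cov T) (h' : Cov T') : Cov (T ∪ T') := by
  obtain ⟨C, hfin, hch, hcov⟩ := h
  obtain ⟨C', hfin', hch', hcov'⟩ := h'
  refine ⟨C ∪ C', hfin.union hfin', ?_, ?_⟩
  · intro pr hpr; rcases hpr with hpr | hpr
    · exact hch pr hpr
    · exact hch' pr hpr
  · intro u hu
    rcases hu with hu | hu
    · obtain ⟨s, hs, hmem⟩ := Set.mem_iUnion₂.1 (hcov hu)
      exact Set.mem_iUnion₂.2 ⟨s, Or.inl hs, hmem⟩
    · obtain ⟨s, hs, hmem⟩ := Set.mem_iUnion₂.1 (hcov' hu)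
      exact Set.mem_iUnion₂.2 ⟨s, Or.inr hs, hmem⟩

theorem cov_pair {S P : Set (List A)} (hS : IsChainFor S (· <:+ ·))
    (hP : IsChainFor P (· <+: ·)) : Cov (prodSet S P) := by
  refine ⟨{(S, P)}, Set.finite_singleton _, ?_, ?_⟩
  · rintro pr rfl; exact ⟨hS, hP⟩
  · intro u hu; exact Set.mem_iUnion₂.2 ⟨(S, P), rfl, hu⟩

theorem cov_finite {T : Set (List A)} (hT : T.Finite) : Cov T := by
  refine ⟨(fun u => ({u}, {([] : List A)})) '' T, hT.image _, ?_, ?_⟩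
  · rintro pr ⟨u, _, rfl⟩
    exact ⟨singleton_chain_suffix u, singleton_chain_prefix []⟩
  · intro u hu
    refine Set.mem_iUnion₂.2 ⟨({u}, {[]}), ⟨u, hu, rfl⟩, ?_⟩
    exact ⟨u, rfl, [], rfl, (List.append_nil u).symm⟩

/-- The set of infixes of a fixed word is finite. -/
theorem finite_infixes (a : List A) : {u : List A | u <:+: a}.Finite := by
  have : {u : List A | u <:+: a} ⊆
      (fun p : ℕ × ℕ => (a.drop p.1).take p.2) '' (Set.Iic (a.length, a.length)) := by
    rintro u ⟨s, t, rfl⟩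
    refine ⟨(s.length, u.length), ⟨?_, ?_⟩, ?_⟩
    · simp
    · simp; omega
    · simp [List.drop_append, List.take_append]
  exact Set.Finite.subset ((Set.finite_Iic _).image _) this


/-- Decomposition of an infix of a concatenation. -/
theorem infix_append_cases {u v w : List A} (h : u <:+: v ++ w) :
    u <:+: v ∨ u <:+: w ∨ ∃ s p, u = s ++ p ∧ s <:+ v ∧ p <+: w := by
  obtain ⟨t₁, t₂, heq⟩ := h
  by_cases h1 : t₁.length + u.length ≤ v.length
  · left
    have h2 : t₁ ++ u <+: v ++ w := ⟨t₂, by rw [← heq, List.append_assoc]⟩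
    have hpre : t₁ ++ u <+: v :=
      List.prefix_of_prefix_length_le h2 (List.prefix_append v w) (by simp; omega)
    obtain ⟨r, hr⟩ := hpre
    exact ⟨t₁, r, by rw [← hr, List.append_assoc]⟩
  · by_cases h2 : v.length ≤ t₁.length
    · right; left
      have hvp : v <+: t₁ :=
        List.prefix_of_prefix_length_le (List.prefix_append v w)
          ⟨u ++ t₂, by rw [← heq]; simp [List.append_assoc]⟩ h2
      obtain ⟨r, hr⟩ := hvp
      refine ⟨r, t₂, ?_⟩
      have : v ++ (r ++ u ++ t₂) = v ++ w := by
        rw [← heq, ← hr]; simp [List.append_assoc]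
      exact List.append_cancel_left this
    · right; right
      push_neg at h1 h2
      set k := v.length - t₁.length with hk
      have hku : k ≤ u.length := by omega
      have hveq : v = t₁ ++ u.take k := by
        have h3 : v = (t₁ ++ (u ++ t₂)).take v.length := by
          rw [List.append_assoc] at heq
          rw [heq, List.take_append_of_le_length (le_refl _), List.take_length]
        rw [h3, List.take_append,
          List.take_of_length_le (by omega), List.take_append_of_le_length hku]
      have hweq : w = u.drop k ++ t₂ := by
        have h3 : w = (t₁ ++ (u ++ t₂)).drop v.length := by
          rw [List.append_assoc] at heq
          rw [heq, List.drop_append,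
            List.drop_of_length_le (le_refl _), Nat.sub_self, List.drop_zero, List.nil_append]
        rw [h3, List.drop_append,
          List.drop_of_length_le (by omega), List.nil_append,
          List.drop_append_of_le_length (by omega)]
      exact ⟨u.take k, u.drop k, (List.take_append_drop _ u).symm,
        ⟨t₁, hveq.symm⟩, ⟨t₂, hweq.symm⟩⟩



/-- A word matching the block structure `l`, where `inl a` is a fixed block `a`
and `inr z` is a power of `z` of length `> b`. -/
def Rep : List (List A ⊕ List A) → List A → ℕ → Prop
  | [], w, _ => w = []
  | (Sum.inl a) :: t, w, b => ∃ w', Rep t w' b ∧ w = a ++ w'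
  | (Sum.inr z) :: t, w, b => ∃ c w', b < c * z.length ∧ Rep t w' b ∧ w = wpow z c ++ w'

def fixedHead : List (List A ⊕ List A) → List A
  | [] => []
  | (Sum.inl a) :: t => a ++ fixedHead t
  | (Sum.inr _) :: _ => []

def headZ : List (List A ⊕ List A) → List A
  | [] => []
  | (Sum.inl _) :: t => headZ t
  | (Sum.inr z) :: _ => z

theorem infix_wpow_cases {u z : List A} {c : ℕ} (h : u <:+: wpow z c) :
    u <:+: z ∨ ∃ s p, u = s ++ p ∧ s ∈ SuffPow z ∧ p ∈ PrefPow z := by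
  induction c with
  | zero =>
      rw [wpow_zero, List.infix_nil] at h
      subst h; left; exact List.nil_infix
  | succ c ih =>
      rw [wpow_succ] at h
      rcases infix_append_cases h with h | h | ⟨s, p, rfl, hs, hp⟩
      · left; exact h
      · exact ih h
      · right; exact ⟨s, p, rfl, ⟨1, by rwa [wpow_one]⟩, ⟨c, hp⟩⟩

theorem prefCover : ∀ (l : List (List A ⊕ List A)) {w : List A} {b : ℕ} {p : List A},
    Rep l w b → p <+: w → p.length ≤ b →
    p <+: fixedHead l ∨ ∃ ρ ∈ PrefPow (headZ l), p = fixedHead l ++ ρ := by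
  intro l
  induction l with
  | nil =>
      intro w b p hrep hp _
      rw [show w = [] from hrep] at hp
      left; rw [List.prefix_nil] at hp; subst hp; exact List.nil_prefix
  | cons head t ih =>
      intro w b p hrep hp hlen
      cases head with
      | inl a =>
          obtain ⟨w', hrep', rfl⟩ := hrep
          by_cases hl : p.length ≤ a.length
          · left
            have : p <+: a :=
              List.prefix_of_prefix_length_le hp (List.prefix_append a w') hl
            exact this.trans (List.prefix_append a (fixedHead t))
          · have hap : a <+: p :=
              List.prefix_of_prefix_length_le (List.prefix_append a w') hp (by omega)
            obtain ⟨p', rfl⟩ := hap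
            have hp' : p' <+: w' := (List.prefix_append_right_inj a).1 hp
            have hlen' : p'.length ≤ b := by
              rw [List.length_append] at hlen; omega
            rcases ih hrep' hp' hlen' with h | ⟨ρ, hρ, rfl⟩
            · left
              show a ++ p' <+: a ++ fixedHead t
              exact (List.prefix_append_right_inj a).2 h
            · right
              refine ⟨ρ, hρ, ?_⟩
              show a ++ (fixedHead t ++ ρ) = (a ++ fixedHead t) ++ ρ
              rw [List.append_assoc]
      | inr z =>
          obtain ⟨c, w', hc, hrep', rfl⟩ := hrep
          right
          refine ⟨p, ⟨c, ?_⟩, (List.nil_append p).symm⟩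
          show p <+: wpow z c
          refine List.prefix_of_prefix_length_le hp (List.prefix_append _ w') ?_
          rw [length_wpow]; omega

theorem cov_rep (l : List (List A ⊕ List A)) :
    Cov {u : List A | ∃ w, Rep l w u.length ∧ u <:+: w} := by
  induction l with
  | nil =>
      refine Cov.mono (cov_finite (Set.finite_singleton ([] : List A))) ?_
      rintro u ⟨w, hw, hu⟩
      rw [show w = [] from hw, List.infix_nil] at hu
      exact hu
  | cons head t ih =>
      cases head with
      | inl a =>
          have hT1 : Cov {u : List A | u <:+: a} := cov_finite (finite_infixes a)
          have hT3 : Cov (prodSet {v : List A | v <:+ a} {v : List A | v <+: fixedHead t}) :=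
            cov_pair (suffOf_chain a) (prefOf_chain (fixedHead t))
          have hT4 : Cov (prodSet {v : List A | v <:+ a}
              {v : List A | ∃ ρ ∈ PrefPow (headZ t), v = fixedHead t ++ ρ}) :=
            cov_pair (suffOf_chain a) (append_chain_prefix _ (prefPow_chain (headZ t)))
          refine Cov.mono (((hT1.union ih).union hT3).union hT4) ?_
          rintro u ⟨w, ⟨w', hrep, rfl⟩, hu⟩
          rcases infix_append_cases hu with h | h | ⟨s, p, rfl, hs, hp⟩
          · exact Or.inl (Or.inl (Or.inl h))
          · exact Or.inl (Or.inl (Or.inr ⟨w', hrep, h⟩))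
          · have hlen : p.length ≤ (s ++ p).length := by simp
            rcases prefCover t hrep hp hlen with h | ⟨ρ, hρ, rfl⟩
            · exact Or.inl (Or.inr ⟨s, hs, p, h, rfl⟩)
            · exact Or.inr ⟨s, hs, fixedHead t ++ ρ, ⟨ρ, hρ, rfl⟩, rfl⟩
      | inr z =>
          have hT1 : Cov {u : List A | u <:+: z} := cov_finite (finite_infixes z)
          have hT2 : Cov (prodSet (SuffPow z) (PrefPow z)) :=
            cov_pair (suffPow_chain z) (prefPow_chain z)
          have hT3 : Cov (prodSet (SuffPow z) {v : List A | v <+: fixedHead t}) :=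
            cov_pair (suffPow_chain z) (prefOf_chain (fixedHead t))
          have hT4 : Cov (prodSet (SuffPow z)
              {v : List A | ∃ ρ ∈ PrefPow (headZ t), v = fixedHead t ++ ρ}) :=
            cov_pair (suffPow_chain z) (append_chain_prefix _ (prefPow_chain (headZ t)))
          refine Cov.mono ((((hT1.union hT2).union ih).union hT3).union hT4) ?_
          rintro u ⟨w, ⟨c, w', hc, hrep, rfl⟩, hu⟩
          rcases infix_append_cases hu with h | h | ⟨s, p, rfl, hs, hp⟩
          · rcases infix_wpow_cases h with h | ⟨s, p, rfl, hsm, hpm⟩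
            · exact Or.inl (Or.inl (Or.inl (Or.inl h)))
            · exact Or.inl (Or.inl (Or.inl (Or.inr ⟨s, hsm, p, hpm, rfl⟩)))
          · exact Or.inl (Or.inl (Or.inr ⟨w', hrep, h⟩))
          · have hsm : s ∈ SuffPow z := ⟨c, hs⟩
            have hlen : p.length ≤ (s ++ p).length := by simp
            rcases prefCover t hrep hp hlen with h | ⟨ρ, hρ, rfl⟩
            · exact Or.inl (Or.inr ⟨s, hsm, p, h, rfl⟩)
            · exact Or.inr ⟨s, hsm, fixedHead t ++ ρ, ⟨ρ, hρ, rfl⟩, rfl⟩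


/-! ### Order-theoretic decomposition into directed pieces -/

def DirOn (D : Set (List A)) : Prop :=
  ∀ a ∈ D, ∀ b ∈ D, ∃ c ∈ D, a <:+: c ∧ b <:+: c

def GoodFor (D : Set (List A)) : Prop :=
  ∃ 𝒟 : Set (Set (List A)), 𝒟.Finite ∧ (∀ E ∈ 𝒟, DirOn E ∧ E ⊆ D) ∧ D ⊆ ⋃₀ 𝒟

theorem goodFor_of_dirOn {D : Set (List A)} (h : DirOn D) : GoodFor D :=
  ⟨{D}, Set.finite_singleton _, by rintro E rfl; exact ⟨h, subset_rfl⟩,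
    by intro x hx; exact ⟨D, rfl, hx⟩⟩

theorem goodFor_union {D₁ D₂ : Set (List A)} (h₁ : GoodFor D₁) (h₂ : GoodFor D₂) :
    GoodFor (D₁ ∪ D₂) := by
  obtain ⟨F₁, hf₁, hd₁, hc₁⟩ := h₁
  obtain ⟨F₂, hf₂, hd₂, hc₂⟩ := h₂
  refine ⟨F₁ ∪ F₂, hf₁.union hf₂, ?_, ?_⟩
  · rintro E (hE | hE)
    · exact ⟨(hd₁ E hE).1, (hd₁ E hE).2.trans Set.subset_union_left⟩
    · exact ⟨(hd₂ E hE).1, (hd₂ E hE).2.trans Set.subset_union_right⟩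
  · rintro x (hx | hx)
    · obtain ⟨E, hE, hxE⟩ := hc₁ hx; exact ⟨E, Or.inl hE, hxE⟩
    · obtain ⟨E, hE, hxE⟩ := hc₂ hx; exact ⟨E, Or.inr hE, hxE⟩

theorem goodFor_congr {D₁ D₂ : Set (List A)} (h : GoodFor D₁) (he : D₁ = D₂) : GoodFor D₂ :=
  he ▸ h

theorem not_goodFor_split {D : Set (List A)} (h : ¬ GoodFor D) :
    ∃ c ∈ D, ¬ GoodFor {x ∈ D | ¬ c <:+: x} := by
  have hnd : ¬ DirOn D := fun hd => h (goodFor_of_dirOn hd)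
  simp only [DirOn, not_forall] at hnd
  obtain ⟨a, ha, b, hb, hab⟩ := hnd
  push_neg at hab
  by_contra hcon
  push_neg at hcon
  have hga := hcon a ha
  have hgb := hcon b hb
  apply h
  refine goodFor_congr (goodFor_union hga hgb) ?_
  apply Set.Subset.antisymm
  · rintro x (⟨hx, _⟩ | ⟨hx, _⟩) <;> exact hx
  · intro x hx
    by_cases hax : a <:+: x
    · by_cases hbx : b <:+: x
      · exact absurd hbx (hab x hx hax)
      · exact Or.inr ⟨hx, hbx⟩
    · exact Or.inl ⟨hx, hax⟩

theorem goodFor_of_wqo {L : Set (List A)} (hL : IsWqoOn L (· <:+: ·)) : GoodFor L := by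
  by_contra hbad
  classical
  -- recursively shrink
  let St := {D : Set (List A) // D ⊆ L ∧ ¬ GoodFor D}
  let nextD : St → St := fun s =>
    ⟨{x ∈ s.1 | ¬ (not_goodFor_split s.2.2).choose <:+: x},
      fun x hx => s.2.1 hx.1, (not_goodFor_split s.2.2).choose_spec.2⟩
  let seq : ℕ → St := fun n => Nat.rec (⟨L, subset_rfl, hbad⟩ : St) (fun _ s => nextD s) n
  let c : ℕ → List A := fun n => (not_goodFor_split (seq n).2.2).choose
  have hseq_succ : ∀ n, (seq (n+1)).1 = {x ∈ (seq n).1 | ¬ c n <:+: x} := fun n => rfl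
  have hc_mem : ∀ n, c n ∈ (seq n).1 := fun n => (not_goodFor_split (seq n).2.2).choose_spec.1
  have hsub : ∀ i j, i ≤ j → (seq j).1 ⊆ (seq i).1 := by
    intro i j hij
    induction j with
    | zero => have : i = 0 := by omega
              subst this; exact subset_rfl
    | succ j ih =>
        rcases Nat.lt_or_ge i (j+1) with h | h
        · refine Set.Subset.trans ?_ (ih (by omega))
          rw [hseq_succ]; exact Set.sep_subset _ _
        · have : i = j + 1 := by omega
          subst this; exact subset_rfl
  obtain ⟨i, j, hij, hinf⟩ := hL c (fun n => (seq n).2.1 (hc_mem n))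
  have hcj : c j ∈ (seq (i+1)).1 := hsub (i+1) j hij (hc_mem j)
  rw [hseq_succ] at hcj
  exact hcj.2 hinf

/-! ### Monotone subsequences -/

theorem mono_subseq (f : ℕ → ℕ) : ∃ φ : ℕ → ℕ, StrictMono φ ∧ Monotone (f ∘ φ) := by
  classical
  have hstep : ∀ i : ℕ, ∃ n, i < n ∧ ∀ m, i < m → f n ≤ f m := by
    intro i
    have hne : (f '' Set.Ioi i).Nonempty := ⟨f (i+1), ⟨i+1, by simp, rfl⟩⟩
    obtain ⟨n, hn, hfn⟩ := Nat.sInf_mem hne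
    exact ⟨n, hn, fun m hm => hfn ▸ Nat.sInf_le ⟨m, hm, rfl⟩⟩
  choose next hnext1 hnext2 using hstep
  have hbase : ∃ n₀ : ℕ, ∀ m, f n₀ ≤ f m := by
    obtain ⟨n, hfn⟩ := Nat.sInf_mem (Set.range_nonempty f)
    exact ⟨n, fun m => hfn ▸ Nat.sInf_le ⟨m, rfl⟩⟩
  obtain ⟨n₀, hn₀⟩ := hbase
  let φ : ℕ → ℕ := fun k => Nat.rec n₀ (fun _ i => next i) k
  have hφsucc : ∀ k, φ (k+1) = next (φ k) := fun k => rfl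
  have hmonoφ : StrictMono φ := by
    apply strictMono_nat_of_lt_succ
    intro k; rw [hφsucc]; exact hnext1 (φ k)
  have hinv : ∀ k, ∀ m, φ k < m → f (φ k) ≤ f m := by
    intro k
    cases k with
    | zero => exact fun m _ => hn₀ m
    | succ k =>
        rw [hφsucc]
        exact fun m hm => hnext2 (φ k) m (lt_trans (hnext1 (φ k)) hm)
  refine ⟨φ, hmonoφ, monotone_nat_of_le_succ fun k => ?_⟩
  exact hinv k (φ (k+1)) (hmonoφ (Nat.lt_succ_self k))

theorem mono_subseq_multi (G : List (ℕ → ℕ)) :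
    ∃ φ : ℕ → ℕ, StrictMono φ ∧ ∀ g ∈ G, Monotone (g ∘ φ) := by
  induction G with
  | nil => exact ⟨id, strictMono_id, by simp⟩
  | cons g t ih =>
      obtain ⟨φ₂, hφ₂, ht⟩ := ih
      obtain ⟨φ₁, hφ₁, hg⟩ := mono_subseq (g ∘ φ₂)
      refine ⟨φ₂ ∘ φ₁, hφ₂.comp hφ₁, ?_⟩
      intro u hu
      rcases List.mem_cons.1 hu with rfl | hu
      · exact hg
      · exact (ht u hu).comp hφ₁.monotone


/-! ### Covering a directed subset of a bounded language -/

theorem rep_ofFn : ∀ {n : ℕ} (tag : Fin n → (List A ⊕ List A)) (blk : Fin n → List A) (b : ℕ),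
    (∀ i, (∃ a, tag i = Sum.inl a ∧ blk i = a) ∨
      (∃ z c, tag i = Sum.inr z ∧ b < c * z.length ∧ blk i = wpow z c)) →
    Rep (List.ofFn tag) (List.ofFn blk).flatten b := by
  intro n
  induction n with
  | zero => intro tag blk b _; simp [List.ofFn_zero]; rfl
  | succ n ih =>
      intro tag blk b h
      rw [List.ofFn_succ (f := tag), List.ofFn_succ (f := blk), List.flatten_cons]
      rcases h 0 with ⟨a, htag, hblk⟩ | ⟨z, c, htag, hc, hblk⟩
      · rw [htag]
        exact ⟨(List.ofFn fun i => blk i.succ).flatten,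
          ih _ _ b (fun i => h i.succ), by rw [hblk]⟩
      · rw [htag]
        exact ⟨c, (List.ofFn fun i => blk i.succ).flatten, hc,
          ih _ _ b (fun i => h i.succ), by rw [hblk]⟩

theorem cov_of_dirOn [Countable A] {L D : Set (List A)} {n : ℕ} {w : Fin n → List A}
    (hbd : ∀ u ∈ L, ∃ c : Fin n → ℕ,
      u = (List.ofFn fun i : Fin n => wpow (w i) (c i)).flatten)
    (hD : D ⊆ L) (hdir : DirOn D) : Cov D := by
  classical
  rcases D.eq_empty_or_nonempty with rfl | hne
  · exact cov_empty
  obtain ⟨f, hf⟩ := (Set.to_countable D).exists_eq_range hne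
  have hfD : ∀ k, f k ∈ D := fun k => hf ▸ Set.mem_range_self k
  let ub : List A → List A → List A := fun a b =>
    if h : ∃ c ∈ D, a <:+: c ∧ b <:+: c then h.choose else []
  have hub : ∀ a b, a ∈ D → b ∈ D → ub a b ∈ D ∧ a <:+: ub a b ∧ b <:+: ub a b := by
    intro a b ha hb
    have h : ∃ c ∈ D, a <:+: c ∧ b <:+: c := hdir a ha b hb
    simp only [ub, dif_pos h]
    exact h.choose_spec
  let d : ℕ → List A := fun k => Nat.rec (f 0) (fun k dk => ub dk (f (k+1))) k
  have hdsucc : ∀ k, d (k+1) = ub (d k) (f (k+1)) := fun _ => rfl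
  have hdD : ∀ k, d k ∈ D := by
    intro k
    induction k with
    | zero => exact hfD 0
    | succ k ih => rw [hdsucc]; exact (hub _ _ ih (hfD _)).1
  have hchain : ∀ i j, i ≤ j → d i <:+: d j := by
    intro i j hij
    induction j with
    | zero => have : i = 0 := by omega
              subst this; exact List.infix_refl _
    | succ j ih =>
        rcases Nat.lt_or_ge i (j+1) with h | h
        · refine (ih (by omega)).trans ?_
          rw [hdsucc]; exact (hub _ _ (hdD j) (hfD _)).2.1
        · have : i = j + 1 := by omega
          subst this; exact List.infix_refl _
  have hcof : ∀ x ∈ D, ∃ k, x <:+: d k := by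
    intro x hx
    rw [hf] at hx
    obtain ⟨k, rfl⟩ := hx
    cases k with
    | zero => exact ⟨0, List.infix_refl _⟩
    | succ k => exact ⟨k+1, by rw [hdsucc]; exact (hub _ _ (hdD k) (hfD (k+1))).2.2⟩
  have hexp : ∀ k, ∃ c : Fin n → ℕ,
      d k = (List.ofFn fun i : Fin n => wpow (w i) (c i)).flatten :=
    fun k => hbd _ (hD (hdD k))
  choose e he using hexp
  obtain ⟨φ, hφ, hmonoL⟩ := mono_subseq_multi (List.ofFn (fun i : Fin n => fun k => e k i))
  have hmono : ∀ i : Fin n, Monotone (fun k => e (φ k) i) :=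
    fun i => hmonoL _ (List.mem_ofFn.2 ⟨i, rfl⟩)
  -- classify coordinates
  let isB : Fin n → Prop := fun i => ∃ M, ∀ k, e (φ k) i ≤ M
  have hBconst : ∀ i : Fin n, ∃ k₀ V, isB i → ∀ k, k₀ ≤ k → e (φ k) i = V := by
    intro i
    by_cases hbdd : isB i
    · obtain ⟨M, hM⟩ := hbdd
      have hne' : (Set.range (fun k => e (φ k) i)).Nonempty := ⟨_, ⟨0, rfl⟩⟩
      have hbdd' : BddAbove (Set.range (fun k => e (φ k) i)) :=
        ⟨M, by rintro v ⟨k, rfl⟩; exact hM k⟩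
      obtain ⟨k₀, hk₀⟩ := Nat.sSup_mem hne' hbdd'
      refine ⟨k₀, e (φ k₀) i, fun _ k hk => le_antisymm ?_ ?_⟩
      · exact le_trans (le_csSup hbdd' ⟨k, rfl⟩) (le_of_eq hk₀.symm)
      · exact hmono i hk
    · exact ⟨0, 0, fun h => absurd h hbdd⟩
  choose kB VB hVB using hBconst
  have hU : ∀ i : Fin n, ¬ isB i → ∀ M, ∃ k₀, ∀ k, k₀ ≤ k → M < e (φ k) i := by
    intro i hb M
    have : ∃ k, M < e (φ k) i := by
      by_contra hcon
      push_neg at hcon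
      exact hb ⟨M, hcon⟩
    obtain ⟨k₀, hk₀⟩ := this
    exact ⟨k₀, fun k hk => lt_of_lt_of_le hk₀ (hmono i hk)⟩
  -- the block structure
  let tag : Fin n → (List A ⊕ List A) := fun i =>
    if w i = [] then Sum.inl []
    else if isB i then Sum.inl (wpow (w i) (VB i))
    else Sum.inr (w i)
  refine Cov.mono (cov_rep (List.ofFn tag)) ?_
  intro u hu
  -- choose a large index K
  obtain ⟨k₁, hk₁⟩ := hcof u hu
  have hK2 : ∀ i : Fin n, ∃ k₂, (¬ w i = [] ∧ ¬ isB i) → ∀ k, k₂ ≤ k → u.length < e (φ k) i := by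
    intro i
    by_cases hc : ¬ w i = [] ∧ ¬ isB i
    · obtain ⟨k₂, hk₂⟩ := hU i hc.2 u.length
      exact ⟨k₂, fun _ => hk₂⟩
    · exact ⟨0, fun h => absurd h hc⟩
  choose k2 hk2 using hK2
  let K := max k₁ (Finset.univ.sup (fun i : Fin n => max (kB i) (k2 i)))
  have hKk₁ : k₁ ≤ K := le_max_left _ _
  have hKi : ∀ i : Fin n, kB i ≤ K ∧ k2 i ≤ K := by
    intro i
    have h1 : max (kB i) (k2 i) ≤ Finset.univ.sup (fun i : Fin n => max (kB i) (k2 i)) :=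
      Finset.le_sup (f := fun i : Fin n => max (kB i) (k2 i)) (Finset.mem_univ i)
    constructor <;> [exact le_trans (le_trans (le_max_left _ _) h1) (le_max_right _ _);
      exact le_trans (le_trans (le_max_right _ _) h1) (le_max_right _ _)]
  refine ⟨d (φ K), ?_, ?_⟩
  · -- Rep (ofFn tag) (d (φ K)) u.length
    rw [he (φ K)]
    apply rep_ofFn
    intro i
    by_cases hwi : w i = []
    · left
      refine ⟨[], by simp [tag, hwi], by rw [hwi, wpow_nil]⟩
    · by_cases hbi : isB i
      · left
        refine ⟨wpow (w i) (VB i), by simp [tag, hwi, hbi], ?_⟩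
        rw [hVB i hbi K (hKi i).1]
      · right
        refine ⟨w i, e (φ K) i, by simp [tag, hwi, hbi], ?_, rfl⟩
        have h1 : u.length < e (φ K) i := hk2 i ⟨hwi, hbi⟩ K (hKi i).2
        have h2 : 1 ≤ (w i).length := by
          cases hw : w i with
          | nil => exact absurd hw hwi
          | cons a l => simp
        calc u.length < e (φ K) i := h1
          _ = e (φ K) i * 1 := (Nat.mul_one _).symm
          _ ≤ e (φ K) i * (w i).length := Nat.mul_le_mul_left _ h2
  · -- u <:+: d (φ K)
    refine hk₁.trans (hchain k₁ (φ K) ?_)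
    exact le_trans hKk₁ (le_trans (hφ.le_apply) (le_refl _))


/-! ### Assembly -/

theorem cov_biUnion {β : Type*} (F : Finset β) (T : β → Set (List A))
    (h : ∀ x ∈ F, Cov (T x)) : Cov (⋃ x ∈ F, T x) := by
  classical
  induction F using Finset.induction_on with
  | empty => simpa using (cov_empty : Cov (∅ : Set (List A)))
  | insert _ _ ha ih =>
      rw [Finset.set_biUnion_insert]
      exact (h _ (Finset.mem_insert_self _ _)).union
        (ih fun x hx => h x (Finset.mem_insert_of_mem hx))

theorem cov_sUnion {𝒟 : Set (Set (List A))} (hfin : 𝒟.Finite) (h : ∀ D ∈ 𝒟, Cov D) :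
    Cov (⋃₀ 𝒟) := by
  classical
  have heq : ⋃₀ 𝒟 = ⋃ D ∈ hfin.toFinset, D := by
    ext x
    simp [Set.mem_sUnion, hfin.mem_toFinset]
  rw [heq]
  exact cov_biUnion _ _ (fun D hD => h D (hfin.mem_toFinset.1 hD))

theorem cov_of_wqo [Countable A] {L : Set (List A)} {n : ℕ} {w : Fin n → List A}
    (hbd : ∀ u ∈ L, ∃ c : Fin n → ℕ,
      u = (List.ofFn fun i : Fin n => wpow (w i) (c i)).flatten)
    (hwqo : IsWqoOn L (· <:+: ·)) : Cov L := by
  obtain ⟨𝒟, hfin, hprop, hcov⟩ := goodFor_of_wqo hwqo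
  refine Cov.mono (cov_sUnion hfin (fun D hD => ?_)) hcov
  exact cov_of_dirOn hbd (hprop D hD).2 (hprop D hD).1

theorem cov_to_fin {L : Set (List A)} (h : Cov L) :
    ∃ (n : ℕ) (S P : Fin n → Set (List A)),
      (∀ i, IsChainFor (S i) (· <:+ ·)) ∧
      (∀ i, IsChainFor (P i) (· <+: ·)) ∧
      L ⊆ ⋃ i, {w | ∃ a ∈ S i, ∃ b ∈ P i, w = a ++ b} := by
  obtain ⟨C, hfin, hch, hcov⟩ := h
  classical
  let F := hfin.toFinset
  let eqv := F.equivFin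
  refine ⟨F.card, fun i => ((eqv.symm i : ↥F) : Set (List A) × Set (List A)).1,
    fun i => ((eqv.symm i : ↥F) : Set (List A) × Set (List A)).2, ?_, ?_, ?_⟩
  · intro i
    have hm : ((eqv.symm i : ↥F) : Set (List A) × Set (List A)) ∈ C :=
      hfin.mem_toFinset.1 (eqv.symm i).2
    exact (hch _ hm).1
  · intro i
    have hm : ((eqv.symm i : ↥F) : Set (List A) × Set (List A)) ∈ C :=
      hfin.mem_toFinset.1 (eqv.symm i).2
    exact (hch _ hm).2
  · intro u hu
    obtain ⟨pr, hpr, hmem⟩ := Set.mem_iUnion₂.1 (hcov hu)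
    refine Set.mem_iUnion.2 ⟨eqv ⟨pr, hfin.mem_toFinset.2 hpr⟩, ?_⟩
    simp only [Equiv.symm_apply_apply]
    exact hmem

theorem suffix_total {S : Set (List A)} (hS : IsChainFor S (· <:+ ·)) {u v : List A}
    (hu : u ∈ S) (hv : v ∈ S) (hlen : u.length ≤ v.length) : u <:+ v := by
  rcases hS u hu v hv with h | h
  · exact h
  · have := List.IsSuffix.eq_of_length h (le_antisymm (List.IsSuffix.length_le h) hlen)
    rw [this]
  -- v <:+ u with |u| ≤ |v| ⇒ v = u

theorem prefix_total {P : Set (List A)} (hP : IsChainFor P (· <+: ·)) {u v : List A}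
    (hu : u ∈ P) (hv : v ∈ P) (hlen : u.length ≤ v.length) : u <+: v := by
  rcases hP u hu v hv with h | h
  · exact h
  · have := List.IsPrefix.eq_of_length h (le_antisymm (List.IsPrefix.length_le h) hlen)
    rw [this]

theorem wqo_of_cover {L : Set (List A)} {n : ℕ} {S P : Fin n → Set (List A)}
    (hS : ∀ i, IsChainFor (S i) (· <:+ ·)) (hP : ∀ i, IsChainFor (P i) (· <+: ·))
    (hsub : L ⊆ ⋃ i, {w | ∃ a ∈ S i, ∃ b ∈ P i, w = a ++ b}) :
    IsWqoOn L (· <:+: ·) := by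
  classical
  intro f hf
  have hmem : ∀ k, ∃ (i : Fin n) (a b : List A),
      a ∈ S i ∧ b ∈ P i ∧ f k = a ++ b := by
    intro k
    obtain ⟨i, a, ha, b, hb, heq⟩ := Set.mem_iUnion.1 (hsub (hf k))
    exact ⟨i, a, b, ha, hb, heq⟩
  choose idx a b ha hb heq using hmem
  obtain ⟨i₀, hi₀⟩ := Finite.exists_infinite_fiber idx
  have hinf : (idx ⁻¹' {i₀}).Infinite := Set.infinite_coe_iff.1 hi₀
  -- strictly monotone enumeration of the fiber
  let ψ : ℕ → ℕ := fun k => Nat.rec (hinf.exists_gt 0).choose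
    (fun _ m => (hinf.exists_gt m).choose) k
  have hψ0 : ψ 0 ∈ idx ⁻¹' {i₀} := (hinf.exists_gt 0).choose_spec.1
  have hψsucc : ∀ k, ψ (k+1) ∈ idx ⁻¹' {i₀} ∧ ψ k < ψ (k+1) := by
    intro k
    exact ⟨(hinf.exists_gt (ψ k)).choose_spec.1, (hinf.exists_gt (ψ k)).choose_spec.2⟩
  have hψmem : ∀ k, idx (ψ k) = i₀ := by
    intro k
    cases k with
    | zero => exact hψ0
    | succ k => exact (hψsucc k).1
  have hψmono : StrictMono ψ := strictMono_nat_of_lt_succ (fun k => (hψsucc k).2)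
  obtain ⟨φ₁, hφ₁, hm₁⟩ := mono_subseq (fun k => (a (ψ k)).length)
  obtain ⟨φ₂, hφ₂, hm₂⟩ := mono_subseq (fun k => (b (ψ (φ₁ k))).length)
  let K₁ := ψ (φ₁ (φ₂ 0))
  let K₂ := ψ (φ₁ (φ₂ 1))
  have hKlt : K₁ < K₂ := hψmono (hφ₁ (hφ₂ Nat.zero_lt_one))
  refine ⟨K₁, K₂, hKlt, ?_⟩
  have haS : ∀ k, a (ψ k) ∈ S i₀ := fun k => by rw [← hψmem k]; exact ha (ψ k)
  have hbP : ∀ k, b (ψ k) ∈ P i₀ := fun k => by rw [← hψmem k]; exact hb (ψ k)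
  have hal : (a K₁).length ≤ (a K₂).length := hm₁ (hφ₂ Nat.zero_lt_one).le
  have hbl : (b K₁).length ≤ (b K₂).length := hm₂ Nat.zero_lt_one.le
  have hsuf : a K₁ <:+ a K₂ := suffix_total (hS i₀) (haS _) (haS _) hal
  have hpre : b K₁ <+: b K₂ := prefix_total (hP i₀) (hbP _) (hbP _) hbl
  obtain ⟨x, hx⟩ := hsuf
  obtain ⟨y, hy⟩ := hpre
  rw [heq K₁, heq K₂, ← hx, ← hy]
  exact ⟨x, y, by simp [List.append_assoc]⟩

end StatementEight

/-- A bounded language is well-quasi-ordered by the infix relation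
iff it is contained in a finite union of products `Sᵢ·Pᵢ` of a chain `Sᵢ` for the
suffix relation with a chain `Pᵢ` for the prefix relation. -/
theorem bounded_wqo_infix_iff_union_suffix_prefix_chains
    {A : Type*} [Fintype A] (L : Set (List A)) (hbd : IsBoundedLang L) :
    IsWqoOn L (· <:+: ·)
    ↔
    ∃ (n : ℕ) (S P : Fin n → Set (List A)),
      (∀ i, IsChainFor (S i) (· <:+ ·)) ∧
      (∀ i, IsChainFor (P i) (· <+: ·)) ∧
      L ⊆ ⋃ i, {w | ∃ a ∈ S i, ∃ b ∈ P i, w = a ++ b} := by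
  obtain ⟨n, w, hbd'⟩ := hbd
  constructor
  · intro hwqo
    exact StatementEight.cov_to_fin (StatementEight.cov_of_wqo hbd' hwqo)
  · rintro ⟨n', S, P, hS, hP, hsub⟩
    exact StatementEight.wqo_of_cover hS hP hsub
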